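/- Let H be a Hermitian d×d complex matrix, let T > 0, and let γ = exp(−H/T)/tr(exp(−H/T)) be the Gibbs state of H at temperature T. Then for every unitary d×d matrix U one has tr(U γ U† H) ≥ tr(γ H). In other words, no unitary extracts energy from a thermal equilibrium state. -/

import Mathlib

open Finset in
lemma gibbs_key (d : ℕ) (T : ℝ) (hT : 0 < T) (lam : Fin d → ℝ) (B : Fin d → Fin d → ℝ)
    (hB0 : ∀ i k, 0 ≤ B i k) (hrow : ∀ i, ∑ k, B i k = 1) (hcol : ∀ k, ∑ i, B i k = 1) :
    ∑ i, Real.exp (-T⁻¹ * lam i) * lam i ≤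
      ∑ i, ∑ k, B i k * (Real.exp (-T⁻¹ * lam k) * lam i) := by
  set p : Fin d → ℝ := fun i => Real.exp (-T⁻¹ * lam i) with hp
  have hpt : ∀ i k, B i k * (p k * lam k) + T * (B i k * (p k - p i)) ≤
      B i k * (p k * lam i) := by
    intro i k
    have hconv : T * (p k - p i) ≤ p k * (lam i - lam k) := by
      have h1 : (lam k - lam i) / T + 1 ≤ Real.exp ((lam k - lam i) / T) :=
        Real.add_one_le_exp _
      have hpk : 0 < p k := Real.exp_pos _
      have h2 : p k * ((lam k - lam i) / T + 1) ≤ p k * Real.exp ((lam k - lam i) / T) :=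
        mul_le_mul_of_nonneg_left h1 hpk.le
      have h3 : p k * Real.exp ((lam k - lam i) / T) = p i := by
        rw [hp, ← Real.exp_add]
        congr 1
        field_simp
        ring
      rw [h3] at h2
      have h4 : p k * ((lam k - lam i) / T) ≤ p i - p k := by nlinarith
      have h5 : p k * (lam k - lam i) ≤ T * (p i - p k) := by
        have := mul_le_mul_of_nonneg_left h4 hT.le
        calc p k * (lam k - lam i) = T * (p k * ((lam k - lam i) / T)) := by
              field_simp
          _ ≤ T * (p i - p k) := this
      nlinarith
    nlinarith [mul_le_mul_of_nonneg_left hconv (hB0 i k)]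
  calc ∑ i, p i * lam i
      = ∑ i, ∑ k, (B i k * (p k * lam k) + T * (B i k * (p k - p i))) := by
        rw [Finset.sum_comm (f := fun i k => B i k * (p k * lam k) + T * (B i k * (p k - p i)))]
        have e1 : ∀ k, ∑ i, (B i k * (p k * lam k) + T * (B i k * (p k - p i)))
            = p k * lam k + T * (p k - (∑ i, B i k * p i)) := by
          intro k
          rw [Finset.sum_add_distrib, ← Finset.sum_mul, hcol, ← Finset.mul_sum]
          congr 1
          · ring
          · congr 1
            simp_rw [mul_sub]
            rw [Finset.sum_sub_distrib, ← Finset.sum_mul, hcol, one_mul]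
        simp_rw [e1]
        rw [Finset.sum_add_distrib, ← Finset.mul_sum]
        have e2 : ∑ k, (p k - ∑ i, B i k * p i) = 0 := by
          rw [Finset.sum_sub_distrib, Finset.sum_comm (f := fun k i => B i k * p i)]
          have : ∀ i, ∑ k, B i k * p i = p i := by
            intro i; rw [← Finset.sum_mul, hrow, one_mul]
          simp_rw [this]
          ring
        rw [e2, mul_zero, add_zero]
    _ ≤ ∑ i, ∑ k, B i k * (p k * lam i) :=
        Finset.sum_le_sum fun i _ => Finset.sum_le_sum fun k _ => hpt i k

/-- No unitary extracts energy from a thermal equilibrium (Gibbs) state: for a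
Hermitian Hamiltonian `H`, temperature `T > 0`, and Gibbs state
`γ = exp(-H/T) / tr(exp(-H/T))`, every unitary `U` satisfies
`tr(U γ U† H) ≥ tr(γ H)`. -/
theorem stmt_3 (d : ℕ) (H : Matrix (Fin d) (Fin d) ℂ) (hH : H.IsHermitian)
    (T : ℝ) (hT : 0 < T) :
    ∀ U ∈ Matrix.unitaryGroup (Fin d) ℂ,
      (Matrix.trace
        (((Matrix.trace (NormedSpace.exp ((-T⁻¹ : ℝ) • H)))⁻¹ •
            NormedSpace.exp ((-T⁻¹ : ℝ) • H)) * H)).re ≤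
      (Matrix.trace
        (U * ((Matrix.trace (NormedSpace.exp ((-T⁻¹ : ℝ) • H)))⁻¹ •
            NormedSpace.exp ((-T⁻¹ : ℝ) • H)) * star U * H)).re := by
  intro U hU
  rcases Nat.eq_zero_or_pos d with hd | hd
  · subst hd
    simp [Matrix.trace]
  set lam := hH.eigenvalues with hlam
  set p : Fin d → ℝ := fun i => Real.exp (-T⁻¹ * lam i) with hp
  set V : Matrix (Fin d) (Fin d) ℂ := (hH.eigenvectorUnitary : Matrix (Fin d) (Fin d) ℂ)
    with hVdef
  have hVmem : V ∈ Matrix.unitaryGroup (Fin d) ℂ := hH.eigenvectorUnitary.2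
  have hV1 : V * star V = 1 := Matrix.mem_unitaryGroup_iff.mp hVmem
  have hV2 : star V * V = 1 := Matrix.mem_unitaryGroup_iff'.mp hVmem
  set E : Matrix (Fin d) (Fin d) ℂ := Matrix.diagonal (fun i => (p i : ℂ)) with hE
  set D : Matrix (Fin d) (Fin d) ℂ := Matrix.diagonal (fun i => (lam i : ℂ)) with hD
  have hspec : H = V * D * star V := by
    have := hH.spectral_theorem
    convert this using 2
    simp [hVdef, hD, Function.comp_def, hlam]
  -- exp of the scaled Hamiltonian
  have hexp : NormedSpace.exp ((-T⁻¹ : ℝ) • H) = V * E * star V := by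
    have hdiag : Matrix.diagonal (fun i => ((-T⁻¹ * lam i : ℝ) : ℂ)) = (-T⁻¹ : ℝ) • D := by
      rw [hD]
      ext i j
      rcases eq_or_ne i j with h | h
      · subst h
        simp [Matrix.diagonal_apply_eq, Complex.real_smul]
      · simp [Matrix.diagonal_apply_ne _ h]
    have hsm : (-T⁻¹ : ℝ) • H = V * Matrix.diagonal (fun i => ((-T⁻¹ * lam i : ℝ) : ℂ)) * star V := by
      rw [hspec, hdiag, Matrix.mul_smul, Matrix.smul_mul]
    have hVinv : V⁻¹ = star V := Matrix.inv_eq_left_inv hV2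
    have hVunit : IsUnit V := ⟨⟨V, star V, hV1, hV2⟩, rfl⟩
    rw [hsm, ← hVinv, Matrix.exp_conj V _ hVunit, hVinv, Matrix.exp_diagonal, Pi.exp_def, hE]
    have hent : (fun i => NormedSpace.exp (((-T⁻¹ * lam i : ℝ) : ℂ))) =
        (fun i => ((p i : ℝ) : ℂ)) := by
      funext i
      rw [← Complex.exp_eq_exp_ℂ, hp]
      exact (Complex.ofReal_exp _).symm
    rw [hent]
  -- trace conjugation invariance
  have htr : ∀ X : Matrix (Fin d) (Fin d) ℂ, Matrix.trace (V * X * star V) = Matrix.trace X := by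
    intro X
    rw [Matrix.trace_mul_cycle, hV2, Matrix.one_mul]
  -- partition function
  set Zr : ℝ := ∑ i, p i with hZr
  have hZ : Matrix.trace (NormedSpace.exp ((-T⁻¹ : ℝ) • H)) = (Zr : ℂ) := by
    rw [hexp, htr, hE, Matrix.trace_diagonal, hZr]
    push_cast
    rfl
  have hZrpos : 0 < Zr := by
    apply Finset.sum_pos (fun i _ => Real.exp_pos _)
    exact Finset.univ_nonempty_iff.mpr ⟨⟨0, hd⟩⟩
  -- the product lemma
  have assoc : ∀ X Y : Matrix (Fin d) (Fin d) ℂ,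
      (V * X * star V) * (V * Y * star V) = V * (X * Y) * star V := by
    intro X Y
    simp only [Matrix.mul_assoc]
    rw [← Matrix.mul_assoc (star V) V (Y * star V), hV2, Matrix.one_mul]
  -- LHS trace value
  have hLHS : Matrix.trace
      (((Matrix.trace (NormedSpace.exp ((-T⁻¹ : ℝ) • H)))⁻¹ •
          NormedSpace.exp ((-T⁻¹ : ℝ) • H)) * H)
      = ((Zr⁻¹ * ∑ i, p i * lam i : ℝ) : ℂ) := by
    rw [Matrix.smul_mul, Matrix.trace_smul, hZ, hexp]
    rw [show H = V * D * star V from hspec, assoc]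
    rw [htr, hE, hD, Matrix.diagonal_mul_diagonal, Matrix.trace_diagonal]
    push_cast
    rw [smul_eq_mul]
  -- define M
  set M : Matrix (Fin d) (Fin d) ℂ := star V * U * V with hM
  have hMmem : M ∈ Matrix.unitaryGroup (Fin d) ℂ :=
    mul_mem (mul_mem (Unitary.star_mem hVmem) hU) hVmem
  have hM1 : M * star M = 1 := Matrix.mem_unitaryGroup_iff.mp hMmem
  have hM2 : star M * M = 1 := Matrix.mem_unitaryGroup_iff'.mp hMmem
  set B : Fin d → Fin d → ℝ := fun i k => Complex.normSq (M i k) with hB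
  have hrow : ∀ i, ∑ k, B i k = 1 := by
    intro i
    have h1 : (M * star M) i i = 1 := by rw [hM1]; simp
    rw [Matrix.mul_apply] at h1
    have h2 : (((∑ k, B i k : ℝ)) : ℂ) = 1 := by
      push_cast
      rw [← h1]
      refine Finset.sum_congr rfl fun k _ => ?_
      rw [Matrix.star_apply, ← Complex.mul_conj]
      rfl
    exact_mod_cast h2
  have hcol : ∀ k, ∑ i, B i k = 1 := by
    intro k
    have h1 : (star M * M) k k = 1 := by rw [hM2]; simp
    rw [Matrix.mul_apply] at h1
    have h2 : (((∑ i, B i k : ℝ)) : ℂ) = 1 := by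
      push_cast
      rw [← h1]
      refine Finset.sum_congr rfl fun i _ => ?_
      rw [Matrix.star_apply, mul_comm, ← Complex.mul_conj]
      rfl
    exact_mod_cast h2
  -- RHS trace value
  have hprod : U * (V * E * star V) * star U * (V * D * star V)
      = V * (M * E * star M * D) * star V := by
    have hstarM : star M = star V * star U * V := by
      rw [hM]
      simp [Matrix.star_mul, Matrix.mul_assoc]
    rw [hstarM, hM]
    simp only [Matrix.mul_assoc]
    rw [← Matrix.mul_assoc V (star V), hV1, Matrix.one_mul]
  have htrM : Matrix.trace (M * E * star M * D)
      = ((∑ i, ∑ k, B i k * (p k * lam i) : ℝ) : ℂ) := by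
    rw [Matrix.trace]
    push_cast
    refine Finset.sum_congr rfl fun i _ => ?_
    rw [Matrix.diag_apply, hD, Matrix.mul_diagonal, Matrix.mul_apply]
    rw [Finset.sum_mul]
    refine Finset.sum_congr rfl fun k _ => ?_
    rw [hE, Matrix.mul_diagonal, Matrix.star_apply]
    rw [hB]
    have : M i k * (p k : ℂ) * star (M i k) = (M i k * star (M i k)) * (p k : ℂ) := by ring
    rw [this]
    rw [show (M i k * star (M i k)) = ((Complex.normSq (M i k) : ℝ) : ℂ) by
      rw [← Complex.mul_conj]; rfl]
    push_cast
    ring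
  have hRHS : Matrix.trace
      (U * ((Matrix.trace (NormedSpace.exp ((-T⁻¹ : ℝ) • H)))⁻¹ •
          NormedSpace.exp ((-T⁻¹ : ℝ) • H)) * star U * H)
      = ((Zr⁻¹ * ∑ i, ∑ k, B i k * (p k * lam i) : ℝ) : ℂ) := by
    rw [Matrix.mul_smul, Matrix.smul_mul, Matrix.smul_mul, Matrix.trace_smul, hZ, hexp]
    rw [show H = V * D * star V from hspec, hprod, htr, htrM]
    push_cast
    rw [smul_eq_mul]
  rw [hLHS, hRHS, Complex.ofReal_re, Complex.ofReal_re]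
  have hkey := gibbs_key d T hT lam B (fun i k => Complex.normSq_nonneg _) hrow hcol
  have : ∑ i, p i * lam i ≤ ∑ i, ∑ k, B i k * (p k * lam i) := hkey
  exact mul_le_mul_of_nonneg_left this (inv_nonneg.mpr hZrpos.le)
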